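/- Let (V_I, D) be a hypercube complex over 𝔽₂ on {0,1}^N in which every V_I is finite-dimensional. Then dim_{𝔽₂} H(V, D) ≤ Σ_{I ∈ {0,1}^N} dim_{𝔽₂} H(V_I, d_I). (This is the algebraic content of Corollary 1.2 in the ungraded case: the rank of the homology of the total complex is bounded by the total rank of the E₁ page of the spectral sequence of the cubic filtration.) -/

import Mathlib

/-- The `(J,I)` component of an endomorphism `D` of the product `∀ I, V I`. -/
noncomputable def hcComp {ι : Type*} [DecidableEq ι] (V : ι → Type*)
    [∀ i, AddCommGroup (V i)] [∀ i, Module (ZMod 2) (V i)]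
    (D : (∀ i, V i) →ₗ[ZMod 2] (∀ i, V i)) (J I : ι) : V I →ₗ[ZMod 2] V J :=
  (LinearMap.proj J).comp (D.comp (LinearMap.single (ZMod 2) V I))

/-- The weight `w(I) = Σ_i I_i` of a vertex of the hypercube `{0,1}^N`. -/
def wt {N : ℕ} (I : Fin N → Bool) : ℕ :=
  (Finset.univ.filter fun i => I i = true).card

/-- Homology `ker d ⧸ im d` of a differential `d` (an endomorphism with `d ∘ d = 0`). -/
abbrev Hmlg {W : Type*} [AddCommGroup W] [Module (ZMod 2) W] (d : W →ₗ[ZMod 2] W) :=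
  LinearMap.ker d ⧸ (LinearMap.range d).comap (LinearMap.ker d).subtype

open Module LinearMap

section Aux

variable {ι : Type*} [Fintype ι] [DecidableEq ι]
variable (V : ι → Type*) [∀ i, AddCommGroup (V i)] [∀ i, Module (ZMod 2) (V i)]

lemma hcComp_apply (D : (∀ i, V i) →ₗ[ZMod 2] (∀ i, V i)) (J I : ι) (x : V I) :
    hcComp V D J I x = D (Pi.single I x) J := by
  simp [hcComp]

lemma D_apply (D : (∀ i, V i) →ₗ[ZMod 2] (∀ i, V i)) (v : ∀ i, V i) (m : ι) :
    D v m = ∑ I, hcComp V D m I (v I) := by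
  conv_lhs => rw [← Finset.univ_sum_single v]
  rw [map_sum]
  simp [hcComp_apply]

/-- The submodule of vectors supported on a finset `s`. -/
def Fsup (s : Finset ι) : Submodule (ZMod 2) (∀ i, V i) where
  carrier := {v | ∀ i ∉ s, v i = 0}
  add_mem' := by intro a b ha hb i hi; simp [Pi.add_apply, ha i hi, hb i hi]
  zero_mem' := by intro i _; rfl
  smul_mem' := by intro c a ha i hi; simp [Pi.smul_apply, ha i hi]

lemma mem_Fsup {s : Finset ι} {v : ∀ i, V i} : v ∈ Fsup V s ↔ ∀ i ∉ s, v i = 0 := Iff.rfl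

variable [PartialOrder ι]

/-- The diagonal components square to zero. -/
lemma diag_sq (D : (∀ i, V i) →ₗ[ZMod 2] (∀ i, V i)) (hD2 : D.comp D = 0)
    (hsupp : ∀ I J : ι, ¬ I ≤ J → hcComp V D J I = 0) (I : ι) :
    (hcComp V D I I).comp (hcComp V D I I) = 0 := by
  ext x
  have h0 : D (D (Pi.single I x)) = 0 := by
    have := DFunLike.congr_fun hD2 (Pi.single I x)
    simpa using this
  have h1 : (D (D (Pi.single I x))) I = 0 := by rw [h0]; rfl
  rw [D_apply] at h1
  have h2 : ∑ K, hcComp V D I K ((D (Pi.single I x)) K)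
      = hcComp V D I I (hcComp V D I I x) := by
    rw [Finset.sum_eq_single I]
    · rw [hcComp_apply V D I I x]
    · intro K _ hKI
      by_cases hK : K ≤ I
      · have : ¬ I ≤ K := fun h => hKI (le_antisymm hK h)
        have hz : hcComp V D K I = 0 := hsupp I K this
        have : (D (Pi.single I x)) K = 0 := by
          rw [← hcComp_apply, hz]; rfl
        rw [this, map_zero]
      · rw [hsupp K I hK]; rfl
    · intro h; exact absurd (Finset.mem_univ I) h
  simp only [LinearMap.comp_apply, LinearMap.zero_apply]
  rw [← h2, h1]

variable [∀ i, Module.Finite (ZMod 2) (V i)]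

lemma rank_sum_le (D : (∀ i, V i) →ₗ[ZMod 2] (∀ i, V i))
    (hsupp : ∀ I J : ι, ¬ I ≤ J → hcComp V D J I = 0) (s : Finset ι)
    (hup : ∀ i ∈ s, ∀ j, i ≤ j → j ∈ s) :
    ∑ i ∈ s, finrank (ZMod 2) (range (hcComp V D i i)) ≤
      finrank (ZMod 2) ((Fsup V s).map D) := by
  induction s using Finset.strongInduction with
  | _ s ih =>
    rcases s.eq_empty_or_nonempty with rfl | hne
    · simp
    obtain ⟨m, hm, hmin⟩ := s.exists_minimal hne
    set s' := s.erase m with hs'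
    have hss : s' ⊂ s := Finset.erase_ssubset hm
    have hup' : ∀ i ∈ s', ∀ j, i ≤ j → j ∈ s' := by
      intro i hi j hij
      have his : i ∈ s := Finset.mem_of_mem_erase hi
      have hjs : j ∈ s := hup i his j hij
      refine Finset.mem_erase.mpr ⟨?_, hjs⟩
      intro hjm
      subst hjm
      rcases lt_or_eq_of_le hij with h | h
      · exact lt_irrefl _ (lt_of_lt_of_le h (hmin his h.le))
      · exact (Finset.mem_erase.mp hi).1 h
    have IH := ih s' hss hup'
    set A := (Fsup V s).map D with hA
    set B := (Fsup V s').map D with hB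
    set π : (∀ i, V i) →ₗ[ZMod 2] V m := LinearMap.proj m with hπ
    set f : A →ₗ[ZMod 2] V m := π.comp A.subtype with hf
    have hrange : range f = A.map π := by
      rw [hf, range_comp, Submodule.range_subtype]
    -- the diagonal block range sits inside π(A)
    have h1 : finrank (ZMod 2) (range (hcComp V D m m)) ≤ finrank (ZMod 2) (A.map π) := by
      apply Submodule.finrank_mono
      rintro _ ⟨x, rfl⟩
      refine ⟨D (Pi.single m x), ⟨Pi.single m x, ?_, rfl⟩, ?_⟩
      · intro i hi
        exact Pi.single_eq_of_ne (by rintro rfl; exact hi hm) x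
      · rw [hcComp_apply]; rfl
    have hBA : B ≤ A := by
      apply Submodule.map_mono
      intro v hv i hi
      exact hv i (fun h => hi (Finset.mem_of_mem_erase h))
    have hBm : ∀ v ∈ B, v m = 0 := by
      rintro _ ⟨v, hv, rfl⟩
      rw [D_apply]
      apply Finset.sum_eq_zero
      intro K _
      by_cases hK : K ∈ s'
      · by_cases hKm : K ≤ m
        · exfalso
          rcases lt_or_eq_of_le hKm with h | h
          · exact lt_irrefl _ (lt_of_lt_of_le h (hmin (Finset.mem_of_mem_erase hK) h.le))
          · exact (Finset.mem_erase.mp hK).1 h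
        · rw [hsupp K m hKm]; rfl
      · rw [hv K hK, map_zero]
    have h2 : finrank (ZMod 2) B ≤ finrank (ZMod 2) (ker f) := by
      have hle : B.comap A.subtype ≤ ker f := by
        rintro ⟨v, hvA⟩ hv
        have := hBm v hv
        simpa [hf, LinearMap.mem_ker, hπ] using this
      calc finrank (ZMod 2) B
          = finrank (ZMod 2) (B.comap A.subtype) :=
            (Submodule.comapSubtypeEquivOfLe hBA).finrank_eq.symm
        _ ≤ finrank (ZMod 2) (ker f) := Submodule.finrank_mono hle
    have h3 : finrank (ZMod 2) (A.map π) + finrank (ZMod 2) (ker f)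
        = finrank (ZMod 2) A := by
      rw [← hrange]
      exact f.finrank_range_add_finrank_ker
    have hsum : ∑ i ∈ s, finrank (ZMod 2) (range (hcComp V D i i))
        = finrank (ZMod 2) (range (hcComp V D m m))
          + ∑ i ∈ s', finrank (ZMod 2) (range (hcComp V D i i)) :=
      (Finset.add_sum_erase s _ hm).symm
    omega

end Aux

lemma hmlg_finrank {W : Type*} [AddCommGroup W] [Module (ZMod 2) W]
    [Module.Finite (ZMod 2) W] (d : W →ₗ[ZMod 2] W) (hd : d.comp d = 0) :
    finrank (ZMod 2) (Hmlg d) + 2 * finrank (ZMod 2) (range d) = finrank (ZMod 2) W := by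
  have hle : range d ≤ ker d := LinearMap.range_le_ker_iff.mpr hd
  have h1 : finrank (ZMod 2) (Hmlg d)
      + finrank (ZMod 2) ((range d).comap (ker d).subtype)
      = finrank (ZMod 2) (ker d) :=
    Submodule.finrank_quotient_add_finrank ((range d).comap (ker d).subtype)
  have h2 : finrank (ZMod 2) ((range d).comap (ker d).subtype)
      = finrank (ZMod 2) (range d) :=
    (Submodule.comapSubtypeEquivOfLe hle).finrank_eq
  have h3 := d.finrank_range_add_finrank_ker
  omega

/-- For a hypercube complex over 𝔽₂ with finite-dimensional vertex spaces, the
dimension of the homology of the total complex is bounded by the sum of the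
dimensions of the homologies of the diagonal differentials (the E₁ page). -/
theorem hypercube_rank_inequality
    (N : ℕ) (hN : 1 ≤ N) (V : (Fin N → Bool) → Type*)
    [∀ I, AddCommGroup (V I)] [∀ I, Module (ZMod 2) (V I)]
    [∀ I, Module.Finite (ZMod 2) (V I)]
    (D : (∀ I, V I) →ₗ[ZMod 2] (∀ I, V I))
    (hD2 : D.comp D = 0)
    (hsupp : ∀ I J : Fin N → Bool, ¬ I ≤ J → hcComp V D J I = 0) :
    Module.finrank (ZMod 2) (Hmlg D) ≤
      ∑ I : Fin N → Bool, Module.finrank (ZMod 2) (Hmlg (hcComp V D I I)) := by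
  classical
  have hdiag : ∀ I, (hcComp V D I I).comp (hcComp V D I I) = 0 :=
    diag_sq V D hD2 hsupp
  have hH : ∀ I, finrank (ZMod 2) (Hmlg (hcComp V D I I))
      + 2 * finrank (ZMod 2) (LinearMap.range (hcComp V D I I)) = finrank (ZMod 2) (V I) :=
    fun I => hmlg_finrank _ (hdiag I)
  have hHD : finrank (ZMod 2) (Hmlg D) + 2 * finrank (ZMod 2) (LinearMap.range D)
      = finrank (ZMod 2) (∀ I, V I) := hmlg_finrank D hD2
  have hFtop : Fsup V (Finset.univ : Finset (Fin N → Bool)) = ⊤ := by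
    ext v
    simp [mem_Fsup]
  have hsum : ∑ I : Fin N → Bool, finrank (ZMod 2) (LinearMap.range (hcComp V D I I)) ≤
      finrank (ZMod 2) (LinearMap.range D) := by
    have := rank_sum_le V D hsupp Finset.univ (by intro i _ j _; exact Finset.mem_univ j)
    rwa [hFtop, Submodule.map_top] at this
  have hdim : finrank (ZMod 2) (∀ I, V I) = ∑ I, finrank (ZMod 2) (V I) :=
    Module.finrank_pi_fintype (ZMod 2)
  have hsumH : ∑ I : Fin N → Bool, (finrank (ZMod 2) (Hmlg (hcComp V D I I))
      + 2 * finrank (ZMod 2) (LinearMap.range (hcComp V D I I)))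
      = ∑ I, finrank (ZMod 2) (V I) := Finset.sum_congr rfl (fun I _ => hH I)
  rw [Finset.sum_add_distrib, ← Finset.mul_sum] at hsumH
  omega
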